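/- For every finite poset P with n elements and every integer t ≥ 2, the local t-dimension of P is at least log_t(n). That is, every local t-realiser of P has maximum multiplicity at least log_t(n). -/

import Mathlib

open Classical Finset Real
open scoped Classical

noncomputable section

/-- A monotone partial function from `P` to the `t`-element chain,
encoded as a function into `Option (Fin t)` (`none` = outside the domain). -/
def MonotonePartial {P : Type*} [PartialOrder P] {t : ℕ} (f : P → Option (Fin t)) : Prop :=
  ∀ ⦃x y : P⦄, x ≤ y → ∀ ⦃a b : Fin t⦄, f x = some a → f y = some b → a ≤ b

/-- `f` separates the pair `(x, y)`: both are in the domain and `f x < f y`. -/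
def Separates {P : Type*} {t : ℕ} (f : P → Option (Fin t)) (x y : P) : Prop :=
  ∃ a b : Fin t, f x = some a ∧ f y = some b ∧ a < b

/-- A local `t`-realiser: a set of monotone partial functions into the `t`-chain
separating every pair `x ≱ y`. -/
def IsLocalRealiser {P : Type*} [PartialOrder P] {t : ℕ}
    (L : Finset (P → Option (Fin t))) : Prop :=
  (∀ f ∈ L, MonotonePartial f) ∧ ∀ x y : P, ¬ y ≤ x → ∃ f ∈ L, Separates f x y

/-- The multiplicity of `x` in `L`: the number of members of `L` whose domain contains `x`. -/
def mult {P : Type*} {t : ℕ} (L : Finset (P → Option (Fin t))) (x : P) : ℕ :=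
  (L.filter fun f => (f x).isSome).card

/-- The local `t`-dimension: minimal possible maximum multiplicity of a local `t`-realiser. -/
def ltdim (t : ℕ) (P : Type*) [PartialOrder P] : ℕ :=
  sInf {d | ∃ L : Finset (P → Option (Fin t)), IsLocalRealiser L ∧ ∀ x, mult L x ≤ d}

lemma mult_le_card {P : Type*} {t : ℕ} (L : Finset (P → Option (Fin t))) (x : P) :
    mult L x ≤ L.card := Finset.card_filter_le _ _

lemma card_le_pow_of_realiser {P : Type*} [PartialOrder P] [Fintype P] {t : ℕ}
    (ht : 2 ≤ t) (L : Finset (P → Option (Fin t))) (hL : IsLocalRealiser L) {d : ℕ}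
    (hd : ∀ x, mult L x ≤ d) : Fintype.card P ≤ t ^ d := by
  classical
  set m := L.card with hm
  set e := min d m with he
  have hde : ∀ x, mult L x ≤ e := fun x => le_min (hd x) (mult_le_card L x)
  have hem : e ≤ m := min_le_right _ _
  have htpos : 0 < t := by omega
  -- the "signature extension" sets
  set S : P → Finset ({f // f ∈ L} → Fin t) := fun x =>
    Finset.univ.filter (fun φ => ∀ f : {f // f ∈ L}, ∀ a : Fin t, f.1 x = some a → φ f = a)
    with hS
  -- pairwise disjointness
  have hdisj : ∀ x y : P, x ≠ y → Disjoint (S x) (S y) := by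
    intro x y hxy
    have hsep : ∃ f ∈ L, ∃ a b : Fin t, f x = some a ∧ f y = some b ∧ a ≠ b := by
      by_cases hyx : y ≤ x
      · have hxny : ¬ x ≤ y := fun h => hxy (le_antisymm h hyx)
        obtain ⟨f, hf, a, b, hfy, hfx, hab⟩ := hL.2 y x hxny
        exact ⟨f, hf, b, a, hfx, hfy, (ne_of_lt hab).symm⟩
      · obtain ⟨f, hf, a, b, hfx, hfy, hab⟩ := hL.2 x y hyx
        exact ⟨f, hf, a, b, hfx, hfy, ne_of_lt hab⟩
    obtain ⟨f, hf, a, b, hfx, hfy, hab⟩ := hsep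
    rw [Finset.disjoint_left]
    intro φ hφx hφy
    simp only [hS, Finset.mem_filter, Finset.mem_univ, true_and] at hφx hφy
    exact hab ((hφx ⟨f, hf⟩ a hfx).symm.trans (hφy ⟨f, hf⟩ b hfy))
  -- lower bound for each S x
  have hcard : ∀ x : P, t ^ (m - e) ≤ (S x).card := by
    intro x
    have hcompl : Fintype.card {f : {f // f ∈ L} // ¬ (f.1 x).isSome} = m - mult L x := by
      rw [Fintype.card_subtype_compl]
      congr 1
      · simp [Fintype.card_coe, hm]
      · have : Fintype.card {f : {f // f ∈ L} // (f.1 x).isSome}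
            = Fintype.card {f // f ∈ L ∧ ((f x).isSome : Prop)} :=
          Fintype.card_congr (Equiv.subtypeSubtypeEquivSubtypeInter
            (fun f => f ∈ L) (fun f => (f x).isSome))
        rw [this, Fintype.card_subtype, mult]
        congr 1
        ext f
        simp
    -- injection from functions on the complement into S x
    set ι : ({f : {f // f ∈ L} // ¬ (f.1 x).isSome} → Fin t) → ({f // f ∈ L} → Fin t) :=
      fun ψ f => if h : (f.1 x).isSome then (f.1 x).get h else ψ ⟨f, h⟩ with hι
    have hmem : ∀ ψ, ι ψ ∈ S x := by
      intro ψ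
      simp only [hS, Finset.mem_filter, Finset.mem_univ, true_and]
      intro f a hfa
      have h : (f.1 x).isSome := by rw [hfa]; rfl
      simp [hι, h, Option.get_of_mem h hfa]
    have hinj : Function.Injective ι := by
      intro ψ ψ' hψ
      funext f
      have := congrFun hψ f.1
      simpa [hι, f.2] using this
    calc t ^ (m - e) ≤ t ^ (m - mult L x) := by
          exact Nat.pow_le_pow_right htpos (by have := hde x; omega)
      _ = Fintype.card ({f : {f // f ∈ L} // ¬ (f.1 x).isSome} → Fin t) := by
          rw [Fintype.card_fun, hcompl, Fintype.card_fin]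
      _ ≤ (S x).card := by
          have : Fintype.card ({f : {f // f ∈ L} // ¬ (f.1 x).isSome} → Fin t)
              ≤ Fintype.card {φ // φ ∈ S x} := Fintype.card_le_of_injective
            (fun ψ => ⟨ι ψ, hmem ψ⟩) (fun ψ ψ' h => hinj (congrArg Subtype.val h))
          simpa [Fintype.card_coe] using this
  -- sum up
  have hsum : Fintype.card P * t ^ (m - e) ≤ t ^ m := by
    calc Fintype.card P * t ^ (m - e) = ∑ _x : P, t ^ (m - e) := by
          simp [Finset.sum_const, Finset.card_univ, mul_comm]
      _ ≤ ∑ x : P, (S x).card := Finset.sum_le_sum (fun x _ => hcard x)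
      _ = (Finset.univ.biUnion S).card := (Finset.card_biUnion
            (fun x _ y _ hxy => hdisj x y hxy)).symm
      _ ≤ Fintype.card ({f // f ∈ L} → Fin t) := Finset.card_le_univ _
      _ = t ^ m := by rw [Fintype.card_fun, Fintype.card_coe, Fintype.card_fin]
  have hpow : t ^ m = t ^ e * t ^ (m - e) := by
    rw [← pow_add]; congr 1; omega
  have : Fintype.card P ≤ t ^ e :=
    Nat.le_of_mul_le_mul_right (by rw [← hpow]; exact hsum) (Nat.pow_pos htpos)
  exact this.trans (Nat.pow_le_pow_right htpos (min_le_left _ _))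

lemma exists_realiser {P : Type*} [PartialOrder P] [Fintype P] (t : ℕ) (ht : 2 ≤ t) :
    ∃ L : Finset (P → Option (Fin t)), IsLocalRealiser L := by
  classical
  set g : P → P → (P → Option (Fin t)) := fun x y z =>
    if z = x then some ⟨0, by omega⟩ else if z = y then some ⟨1, by omega⟩ else none with hg
  set L0 : Finset (P → Option (Fin t)) :=
    ((Finset.univ : Finset (P × P)).filter fun p => ¬ p.2 ≤ p.1).image
      (fun p => g p.1 p.2) with hL0
  refine ⟨L0, ?_, ?_⟩
  · intro f hf
    simp only [hL0, Finset.mem_image, Finset.mem_filter, Finset.mem_univ, true_and] at hf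
    obtain ⟨⟨x, y⟩, hxy, rfl⟩ := hf
    intro u v huv a b hu hv
    simp only [hg] at hu hv
    by_cases hux : u = x
    · rw [if_pos hux] at hu
      obtain rfl : (⟨0, by omega⟩ : Fin t) = a := Option.some_injective _ hu
      simp [Fin.le_def]
    · rw [if_neg hux] at hu
      by_cases huy : u = y
      · rw [if_pos huy] at hu
        obtain rfl : (⟨1, by omega⟩ : Fin t) = a := Option.some_injective _ hu
        by_cases hvx : v = x
        · have hyx : y ≤ x := by rw [← huy, ← hvx]; exact huv
          exact absurd hyx hxy
        · rw [if_neg hvx] at hv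
          by_cases hvy : v = y
          · rw [if_pos hvy] at hv
            obtain rfl : (⟨1, by omega⟩ : Fin t) = b := Option.some_injective _ hv
            exact le_refl _
          · rw [if_neg hvy] at hv; exact absurd hv (by simp)
      · rw [if_neg huy] at hu; exact absurd hu (by simp)
  · intro x y hyx
    have hxy : y ≠ x := fun h => hyx (h ▸ le_refl x)
    refine ⟨g x y, ?_, ⟨0, by omega⟩, ⟨1, by omega⟩, ?_, ?_, ?_⟩
    · simp only [hL0, Finset.mem_image, Finset.mem_filter, Finset.mem_univ, true_and]
      exact ⟨(x, y), hyx, rfl⟩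
    · simp [hg]
    · simp [hg, hxy]
    · simp [Fin.lt_def]

theorem ltdim_ge_logb (P : Type*) [PartialOrder P] [Fintype P] [Nonempty P]
    (t : ℕ) (ht : 2 ≤ t) :
    (∀ L : Finset (P → Option (Fin t)), IsLocalRealiser L →
      ∃ x : P, Real.logb t (Fintype.card P) ≤ (mult L x : ℝ)) ∧
    Real.logb t (Fintype.card P) ≤ (ltdim t P : ℝ) := by
  have h1t : (1 : ℝ) < (t : ℝ) := by exact_mod_cast (by omega : 1 < t)
  have key : ∀ d : ℕ, Fintype.card P ≤ t ^ d → Real.logb t (Fintype.card P) ≤ (d : ℝ) := by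
    intro d hnd
    have hnpos : (0 : ℝ) < (Fintype.card P : ℝ) := by
      exact_mod_cast Fintype.card_pos
    calc Real.logb t (Fintype.card P) ≤ Real.logb t ((t : ℝ) ^ d) :=
          Real.logb_le_logb_of_le h1t hnpos (by exact_mod_cast hnd)
      _ = (d : ℝ) := by
          rw [Real.logb_pow, Real.logb_self_eq_one h1t, mul_one]
  have part1 : ∀ L : Finset (P → Option (Fin t)), IsLocalRealiser L →
      ∃ x : P, Real.logb t (Fintype.card P) ≤ (mult L x : ℝ) := by
    intro L hL
    obtain ⟨x0, _, hx0⟩ := Finset.exists_max_image (Finset.univ : Finset P) (mult L)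
      Finset.univ_nonempty
    exact ⟨x0, key (mult L x0)
      (card_le_pow_of_realiser ht L hL (fun x => hx0 x (Finset.mem_univ x)))⟩
  refine ⟨part1, ?_⟩
  obtain ⟨L0, hL0⟩ := exists_realiser (P := P) t ht
  have hne : {d | ∃ L : Finset (P → Option (Fin t)), IsLocalRealiser L ∧
      ∀ x, mult L x ≤ d}.Nonempty :=
    ⟨L0.card, L0, hL0, fun x => mult_le_card L0 x⟩
  obtain ⟨L, hLr, hLb⟩ := Nat.sInf_mem hne
  obtain ⟨x, hx⟩ := part1 L hLr
  exact hx.trans (by exact_mod_cast hLb x)
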